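/- Let 𝓗 and Γ be n×n Hermitian complex matrices with Γ positive semidefinite, let W be an n×k complex matrix, and suppose Δ = 𝓗 + iΓ + iπWW† is invertible. Define S = I_k − 2πi·W†Δ⁻¹W. Then I_k − S†S = 4π·W†(Δ⁻¹)†ΓΔ⁻¹W, which is positive semidefinite; hence ‖Sx‖ ≤ ‖x‖ for every x ∈ ℂᵏ, and S is unitary if Γ = 0. -/

import Mathlib

open Matrix
open scoped ComplexOrder

/-- Sub-unitarity of the lossy scattering matrix (Eq. (8)): for Hermitian `𝓗`, positive
semidefinite Hermitian loss matrix `Γ`, coupling matrix `W`, and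
`Δ = 𝓗 + iΓ + iπ W Wᴴ` invertible, the scattering matrix `S = I − 2πi Wᴴ Δ⁻¹ W` satisfies
`I − SᴴS = 4π Wᴴ (Δ⁻¹)ᴴ Γ Δ⁻¹ W`, which is positive semidefinite; hence `‖Sx‖ ≤ ‖x‖` for
every `x ∈ ℂᵏ`, and `S` is unitary if `Γ = 0`. -/
theorem lossy_scattering_subunitary (n k : ℕ) (𝓗 Γ : Matrix (Fin n) (Fin n) ℂ)
    (h𝓗 : 𝓗.IsHermitian) (hΓHerm : Γ.IsHermitian) (hΓ : Γ.PosSemidef)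
    (W : Matrix (Fin n) (Fin k) ℂ)
    (Δ : Matrix (Fin n) (Fin n) ℂ)
    (hΔdef : Δ = 𝓗 + Complex.I • Γ + ((Real.pi : ℂ) * Complex.I) • (W * Wᴴ))
    (hΔ : IsUnit Δ)
    (S : Matrix (Fin k) (Fin k) ℂ)
    (hS : S = 1 - ((2 * (Real.pi : ℂ)) * Complex.I) • (Wᴴ * Δ⁻¹ * W)) :
    (1 - Sᴴ * S = ((4 * Real.pi : ℝ) : ℂ) • (Wᴴ * (Δ⁻¹)ᴴ * Γ * Δ⁻¹ * W)) ∧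
    (1 - Sᴴ * S).PosSemidef ∧
    (∀ x : EuclideanSpace ℂ (Fin k), ‖Matrix.toEuclideanLin S x‖ ≤ ‖x‖) ∧
    (Γ = 0 → Sᴴ * S = 1 ∧ S * Sᴴ = 1) := by
  have hdet : IsUnit Δ.det := (Matrix.isUnit_iff_isUnit_det Δ).mp hΔ
  set B := Δ⁻¹ with hB
  have hΔB : Δ * B = 1 := Matrix.mul_nonsing_inv Δ hdet
  have hBΔ : B * Δ = 1 := Matrix.nonsing_inv_mul Δ hdet
  set c : ℂ := (2 * (Real.pi : ℂ)) * Complex.I with hc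
  set r : ℂ := ((4 * Real.pi : ℝ) : ℂ) with hr
  -- conjugate transpose of Δ
  have s1 : star (Complex.I) = -Complex.I := Complex.conj_I
  have s2 : star ((Real.pi : ℂ) * Complex.I) = -((Real.pi : ℂ) * Complex.I) := by
    rw [star_mul', s1, Complex.star_def, Complex.conj_ofReal]; ring
  have hΔH : Δᴴ = 𝓗 - Complex.I • Γ - ((Real.pi : ℂ) * Complex.I) • (W * Wᴴ) := by
    rw [hΔdef, conjTranspose_add, conjTranspose_add, conjTranspose_smul, conjTranspose_smul,
      conjTranspose_mul, conjTranspose_conjTranspose, h𝓗.eq, hΓHerm.eq, s1, s2]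
    module
  -- conjugate transpose of S
  have hSH : Sᴴ = 1 + c • (Wᴴ * (Bᴴ * W)) := by
    rw [hS]
    have hstarc : star (c) = -c := by
      rw [hc, Complex.star_def]
      simp only [_root_.map_mul, Complex.conj_I, Complex.conj_ofReal, map_ofNat]
      ring
    simp [conjTranspose_sub, conjTranspose_smul, conjTranspose_mul, hstarc, neg_smul,
      sub_eq_add_neg, Matrix.mul_assoc]
  have hS' : S = 1 - c • (Wᴴ * (B * W)) := by
    rw [hS, Matrix.mul_assoc]
  -- the inner bracket identity
  have hinner : c • Δᴴ - c • Δ + (c * c) • (W * Wᴴ) = r • Γ := by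
    rw [hΔH, hΔdef]
    have h1 : c * Complex.I = -(2 * (Real.pi : ℂ)) := by
      rw [hc]; linear_combination (2 * (Real.pi : ℂ)) * Complex.I_mul_I
    have h2 : c * ((Real.pi : ℂ) * Complex.I) = -(2 * (Real.pi : ℂ) * (Real.pi : ℂ)) := by
      rw [hc]; linear_combination (2 * (Real.pi : ℂ) * (Real.pi : ℂ)) * Complex.I_mul_I
    have h3 : c * c = -(4 * (Real.pi : ℂ) * (Real.pi : ℂ)) := by
      rw [hc]; linear_combination (4 * (Real.pi : ℂ) * (Real.pi : ℂ)) * Complex.I_mul_I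
    have h4 : r = 4 * (Real.pi : ℂ) := by push_cast [hr]; ring
    rw [h4]
    simp only [smul_sub, smul_add, smul_smul, h1, h2, h3]
    module
  -- main identity
  have key : 1 - Sᴴ * S = r • (Wᴴ * (Δ⁻¹)ᴴ * Γ * Δ⁻¹ * W) := by
    have hA : Wᴴ * (B * W) = Wᴴ * (Bᴴ * (Δᴴ * (B * W))) := by
      have : Bᴴ * Δᴴ = 1 := by rw [← conjTranspose_mul, hΔB, conjTranspose_one]
      rw [← Matrix.mul_assoc Bᴴ Δᴴ, this, Matrix.one_mul]
    have hA' : Wᴴ * (Bᴴ * W) = Wᴴ * (Bᴴ * (Δ * (B * W))) := by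
      rw [← Matrix.mul_assoc Δ B, hΔB, Matrix.one_mul]
    have hAA : (Wᴴ * (Bᴴ * W)) * (Wᴴ * (B * W)) = Wᴴ * (Bᴴ * ((W * Wᴴ) * (B * W))) := by
      simp only [Matrix.mul_assoc]
    have expand : 1 - Sᴴ * S
        = c • (Wᴴ * (B * W)) - c • (Wᴴ * (Bᴴ * W))
          + (c * c) • ((Wᴴ * (Bᴴ * W)) * (Wᴴ * (B * W))) := by
      rw [hSH, hS']
      simp only [Matrix.add_mul, Matrix.mul_sub, Matrix.mul_one, Matrix.one_mul,
        Matrix.smul_mul, Matrix.mul_smul, smul_smul, smul_sub, smul_add]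
      abel
    rw [expand, hAA, hA, hA']
    calc c • (Wᴴ * (Bᴴ * (Δᴴ * (B * W)))) - c • (Wᴴ * (Bᴴ * (Δ * (B * W))))
          + (c * c) • (Wᴴ * (Bᴴ * ((W * Wᴴ) * (B * W))))
        = Wᴴ * (Bᴴ * ((c • Δᴴ - c • Δ + (c * c) • (W * Wᴴ)) * (B * W))) := by
          simp only [Matrix.sub_mul, Matrix.add_mul, Matrix.smul_mul, Matrix.mul_sub,
            Matrix.mul_add, Matrix.mul_smul]
      _ = Wᴴ * (Bᴴ * ((r • Γ) * (B * W))) := by rw [hinner]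
      _ = r • (Wᴴ * (Δ⁻¹)ᴴ * Γ * Δ⁻¹ * W) := by
          simp only [Matrix.smul_mul, Matrix.mul_smul, ← hB, Matrix.mul_assoc]
  -- positive semidefiniteness
  have hrΓ : (r • Γ).PosSemidef := by
    have hr0 : (0 : ℂ) ≤ r := by
      rw [hr]
      exact_mod_cast Complex.zero_le_real.mpr (by positivity)
    refine Matrix.PosSemidef.of_dotProduct_mulVec_nonneg ?_ ?_
    · rw [IsHermitian, conjTranspose_smul, hΓHerm.eq]
      congr 1
      rw [hr]
      simp [Complex.star_def, Complex.conj_ofReal]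
    · intro x
      rw [Matrix.smul_mulVec, dotProduct_smul]
      exact mul_nonneg hr0 (hΓ.dotProduct_mulVec_nonneg x)
  have hPSD : (1 - Sᴴ * S).PosSemidef := by
    rw [key]
    have := hrΓ.conjTranspose_mul_mul_same (B * W)
    have heq : (B * W)ᴴ * (r • Γ) * (B * W) = r • (Wᴴ * (Δ⁻¹)ᴴ * Γ * Δ⁻¹ * W) := by
      simp only [conjTranspose_mul, Matrix.smul_mul, Matrix.mul_smul, ← hB, Matrix.mul_assoc]
    rwa [heq] at this
  refine ⟨key, hPSD, ?_, ?_⟩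
  · intro x
    set v : Fin k → ℂ := (WithLp.equiv 2 (Fin k → ℂ)) x with hv
    have hx2 : ‖x‖ ^ 2 = RCLike.re (inner (𝕜 := ℂ) x x) := by
      rw [← @inner_self_eq_norm_sq ℂ]
    have hSx : Matrix.toEuclideanLin S x = (WithLp.equiv 2 (Fin k → ℂ)).symm (S *ᵥ v) := by
      rw [Matrix.toEuclideanLin_apply]; rfl
    have hSx2 : ‖Matrix.toEuclideanLin S x‖ ^ 2
        = RCLike.re (star v ⬝ᵥ ((Sᴴ * S) *ᵥ v)) := by
      rw [← @inner_self_eq_norm_sq ℂ, hSx]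
      congr 1
      change (S *ᵥ v) ⬝ᵥ star (S *ᵥ v) = _
      rw [star_mulVec, dotProduct_comm, Matrix.dotProduct_mulVec,
        Matrix.vecMul_vecMul, ← Matrix.dotProduct_mulVec]
    have hx2' : ‖x‖ ^ 2 = RCLike.re (star v ⬝ᵥ v) := by
      rw [hx2, EuclideanSpace.inner_eq_star_dotProduct]
      exact congrArg RCLike.re (dotProduct_comm _ _)
    have hnn := hPSD.re_dotProduct_nonneg v
    rw [Matrix.sub_mulVec, Matrix.one_mulVec, dotProduct_sub, map_sub] at hnn
    have hsq : ‖Matrix.toEuclideanLin S x‖ ^ 2 ≤ ‖x‖ ^ 2 := by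
      rw [hSx2, hx2']; linarith
    nlinarith [norm_nonneg (Matrix.toEuclideanLin S x), norm_nonneg x]
  · intro hΓ0
    have h1 : Sᴴ * S = 1 := by
      have := key
      rw [hΓ0] at this
      simp only [Matrix.mul_zero, Matrix.zero_mul, smul_zero] at this
      exact (sub_eq_zero.mp this).symm
    exact ⟨h1, mul_eq_one_comm.mp h1⟩
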